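/- For every ε with 0 < ε < 1/2, the blow-up BΔ(ε) of the ε-neighborhood of the diagonal of M × M, regarded as a subspace of the tangent bundle TM via the embedding (p,q,R) ↦ e^{d(p,q)} v_R, is compact. -/
import Mathlib


noncomputable section
open Set MeasureTheory

/-- The deck transformation relation defining the Möbius band: `(z,w) ↦ (z+1, -w)`. -/
def MobRel (p q : ℝ × ℝ) : Prop :=
  ∃ n : ℤ, q.1 = p.1 + n ∧ q.2 = (-1 : ℝ) ^ n * p.2

/-- The extended (open) Möbius band `ℝ²/⟨τ⟩`. -/
def Mext : Type := Quot MobRel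

instance : TopologicalSpace Mext := instTopologicalSpaceQuot

/-- Projection from the plane. -/
def piE : ℝ × ℝ → Mext := Quot.mk _

/-- The strip `ℝ × [-1/2, 1/2]`. -/
def stripS : Set (ℝ × ℝ) := {p | p.2 ∈ Icc (-(1:ℝ)/2) (1/2)}

/-- The closed Möbius band `M = (ℝ × [-1/2,1/2])/⟨τ⟩`. -/
def Mob : Type := {x : Mext // x ∈ piE '' stripS}

instance : TopologicalSpace Mob := instTopologicalSpaceSubtype

/-- The projection `π` from the strip to the Möbius band. -/
def piM (p : ℝ × ℝ) (hp : p ∈ stripS) : Mob := ⟨piE p, ⟨p, hp, rfl⟩⟩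

/-- The boundary `∂M` of the Möbius band. -/
def MobBoundary : Set Mob := {x | ∃ p ∈ stripS, piE p = x.1 ∧ |p.2| = 1/2}

/-- The interior of the Möbius band. -/
def MobInterior : Set Mob := {x | ∃ p ∈ stripS, piE p = x.1 ∧ |p.2| < 1/2}

/-- The "branch cut" `ℓ = π({1/2} × I)`. -/
def lineL : Set Mob := {x | ∃ y ∈ Icc (-(1:ℝ)/2) (1/2), piE (1/2, y) = x.1}

/-- `M̂ = M \ ℓ`, an embedded open disc chart. -/
def Mhat : Set Mob := {x | x ∉ lineL}

instance : MeasurableSpace Mext := borel _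
instance : BorelSpace Mext := ⟨rfl⟩
instance : MeasurableSpace Mob := Subtype.instMeasurableSpace

/-- A fundamental domain for the Möbius band. -/
def fundDom : Set (ℝ × ℝ) := Ico (0:ℝ) 1 ×ˢ Icc (-(1:ℝ)/2) (1/2)

/-- The measure on the Möbius band induced by the standard density form `ω`,
i.e. the push-forward of Lebesgue measure on a fundamental domain. -/
def mobMeasure : Measure Mob :=
  Measure.comap Subtype.val ((volume.restrict fundDom).map piE)


/-- The Euclidean norm on `ℝ²` (the Riemannian metric of `M` comes from the Euclidean
metric of the plane). -/
def e2 (v : ℝ × ℝ) : ℝ := Real.sqrt (v.1 ^ 2 + v.2 ^ 2)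

/-- The distance on the extended Möbius band induced by the Euclidean metric. -/
def mdist (x y : Mext) : ℝ :=
  sInf {r : ℝ | ∃ a b : ℝ × ℝ, piE a = x ∧ piE b = y ∧ e2 (a - b) = r}

/-- The deck-transformation relation on `ℝ² × ℝ²` defining the tangent bundle of the
extended Möbius band (`dτ(z,w;v₁,v₂) = (z+1,-w;v₁,-v₂)`). -/
def TanRel : ((ℝ × ℝ) × (ℝ × ℝ)) → ((ℝ × ℝ) × (ℝ × ℝ)) → Prop :=
  fun a b => ∃ n : ℤ, b.1.1 = a.1.1 + n ∧ b.1.2 = (-1:ℝ) ^ n * a.1.2 ∧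
    b.2.1 = a.2.1 ∧ b.2.2 = (-1:ℝ) ^ n * a.2.2

/-- The tangent bundle of the extended Möbius band; it contains the tangent bundle `TM`
of `M` as the part with footpoint in the strip. -/
def TMext : Type := Quot TanRel

instance : TopologicalSpace TMext := instTopologicalSpaceQuot

/-- The blow-up `BΔ(ε)` of the `ε`-neighbourhood `Δ(ε)` of the diagonal, realized as a
subspace of the tangent bundle via the embedding `(p,q,R) ↦ e^{d(p,q)} v_R`: it consists of
the classes of pairs `(p,v)` with `p` in the strip, `1 ≤ |v|`, `log |v| ≤ ε`, and such that
if `|v| > 1` then the point `q = exp_p((log|v|)·v/|v|)` lies in `M`. -/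
def BDelta (ε : ℝ) : Set TMext :=
  {w | ∃ p v : ℝ × ℝ, Quot.mk TanRel (p, v) = w ∧ p ∈ stripS ∧
    1 ≤ e2 v ∧ Real.log (e2 v) ≤ ε ∧
    (1 < e2 v → p + (Real.log (e2 v) / e2 v) • v ∈ stripS)}

lemma continuous_e2 : Continuous e2 := by
  unfold e2
  exact Real.continuous_sqrt.comp (by fun_prop)

lemma e2_nonneg (v : ℝ × ℝ) : 0 ≤ e2 v := Real.sqrt_nonneg _

lemma e2_sq (v : ℝ × ℝ) : (e2 v) ^ 2 = v.1 ^ 2 + v.2 ^ 2 :=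
  Real.sq_sqrt (by positivity)

lemma isClosed_stripS : IsClosed stripS :=
  (isClosed_Icc).preimage continuous_snd

/-- The "endpoint" map. -/
def gmap (x : (ℝ × ℝ) × (ℝ × ℝ)) : ℝ × ℝ :=
  x.1 + (Real.log (e2 x.2) / e2 x.2) • x.2

/-- A compact fundamental set for `BDelta ε`. -/
def Kset (ε : ℝ) : Set ((ℝ × ℝ) × (ℝ × ℝ)) :=
  {x | x.1.1 ∈ Icc (0:ℝ) 1 ∧ x.1 ∈ stripS ∧ 1 ≤ e2 x.2 ∧ e2 x.2 ≤ Real.exp ε ∧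
    gmap x ∈ stripS}

lemma neg_one_zpow_sq (n : ℤ) : ((-1:ℝ) ^ n) ^ 2 = 1 := by
  rcases Int.even_or_odd n with h | h
  · rw [h.neg_one_zpow]; norm_num
  · rw [h.neg_one_zpow]; norm_num

lemma e2_flip (n : ℤ) (v : ℝ × ℝ) : e2 (v.1, (-1:ℝ) ^ n * v.2) = e2 v := by
  unfold e2
  congr 1
  have := neg_one_zpow_sq n
  simp only [mul_pow]
  rw [this, one_mul]

lemma isCompact_Kset (ε : ℝ) : IsCompact (Kset ε) := by
  have hcont : Continuous fun x : (ℝ × ℝ) × (ℝ × ℝ) => e2 x.2 :=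
    continuous_e2.comp continuous_snd
  -- closedness
  have hW : IsClosed {x : (ℝ × ℝ) × (ℝ × ℝ) | 1 ≤ e2 x.2} :=
    isClosed_le continuous_const hcont
  have hg : ContinuousOn gmap {x : (ℝ × ℝ) × (ℝ × ℝ) | 1 ≤ e2 x.2} := by
    have hlog : ContinuousOn (fun x : (ℝ × ℝ) × (ℝ × ℝ) => Real.log (e2 x.2))
        {x | 1 ≤ e2 x.2} := by
      apply Real.continuousOn_log.comp hcont.continuousOn
      intro x hx
      simp only [Set.mem_setOf_eq] at hx
      simp only [Set.mem_compl_iff, Set.mem_singleton_iff]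
      intro h0
      rw [h0] at hx
      norm_num at hx
    have hden : ∀ x ∈ {x : (ℝ × ℝ) × (ℝ × ℝ) | 1 ≤ e2 x.2}, e2 x.2 ≠ 0 := by
      intro x hx h0
      simp only [Set.mem_setOf_eq] at hx
      rw [h0] at hx
      norm_num at hx
    exact continuousOn_fst.add
      ((hlog.div hcont.continuousOn hden).smul continuousOn_snd)
  have hclosed : IsClosed (Kset ε) := by
    have h1 : IsClosed {x : (ℝ × ℝ) × (ℝ × ℝ) | x.1.1 ∈ Icc (0:ℝ) 1} :=
      isClosed_Icc.preimage (continuous_fst.fst)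
    have h2 : IsClosed {x : (ℝ × ℝ) × (ℝ × ℝ) | x.1 ∈ stripS} :=
      isClosed_stripS.preimage continuous_fst
    have h4 : IsClosed {x : (ℝ × ℝ) × (ℝ × ℝ) | e2 x.2 ≤ Real.exp ε} :=
      isClosed_le hcont continuous_const
    have h5 : IsClosed ({x : (ℝ × ℝ) × (ℝ × ℝ) | 1 ≤ e2 x.2} ∩ gmap ⁻¹' stripS) :=
      hg.preimage_isClosed_of_isClosed hW isClosed_stripS
    have : Kset ε = {x | x.1.1 ∈ Icc (0:ℝ) 1} ∩ {x | x.1 ∈ stripS} ∩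
        {x | e2 x.2 ≤ Real.exp ε} ∩ ({x | 1 ≤ e2 x.2} ∩ gmap ⁻¹' stripS) := by
      ext x
      simp only [Kset, Set.mem_setOf_eq, Set.mem_inter_iff, Set.mem_preimage]
      tauto
    rw [this]
    exact ((h1.inter h2).inter h4).inter h5
  -- boundedness
  set E := Real.exp ε with hE
  have hEpos : 0 < E := Real.exp_pos ε
  apply IsCompact.of_isClosed_subset
    (((isCompact_Icc.prod isCompact_Icc).prod
      (isCompact_Icc.prod isCompact_Icc)) :
      IsCompact ((Icc (0:ℝ) 1 ×ˢ Icc (-(1:ℝ)/2) (1/2)) ×ˢ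
        (Icc (-E) E ×ˢ Icc (-E) E)))
    hclosed
  rintro ⟨p, v⟩ ⟨h1, h2, h3, h4, h5⟩
  have hsq : (e2 v) ^ 2 = v.1 ^ 2 + v.2 ^ 2 := e2_sq v
  have hv1 : v.1 ∈ Icc (-E) E := by
    constructor <;> nlinarith [sq_nonneg v.2, e2_nonneg v, sq_nonneg (v.1 - E),
      sq_nonneg (v.1 + E)]
  have hv2 : v.2 ∈ Icc (-E) E := by
    constructor <;> nlinarith [sq_nonneg v.1, e2_nonneg v, sq_nonneg (v.2 - E),
      sq_nonneg (v.2 + E)]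
  exact ⟨⟨h1, h2⟩, hv1, hv2⟩

lemma bDelta_eq_image (ε : ℝ) : BDelta ε = Quot.mk TanRel '' Kset ε := by
  ext w
  constructor
  · rintro ⟨p, v, hw, hp, h1, h2, h3⟩
    set n : ℤ := -⌊p.1⌋ with hn
    refine ⟨((p.1 + n, (-1:ℝ) ^ n * p.2), (v.1, (-1:ℝ) ^ n * v.2)), ?_, ?_⟩
    · have he2 : e2 (v.1, (-1:ℝ) ^ n * v.2) = e2 v := e2_flip n v
      have hsgn : (-1:ℝ) ^ n = 1 ∨ (-1:ℝ) ^ n = -1 := by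
        rcases Int.even_or_odd n with h | h
        · exact Or.inl h.neg_one_zpow
        · exact Or.inr h.neg_one_zpow
      have hfrac : p.1 + (n : ℝ) ∈ Icc (0:ℝ) 1 := by
        have h01 : p.1 + (n : ℝ) = Int.fract p.1 := by
          simp [hn, Int.fract, sub_eq_add_neg]
        rw [h01]
        exact ⟨Int.fract_nonneg _, le_of_lt (Int.fract_lt_one _)⟩
      have hp2 : (-1:ℝ) ^ n * p.2 ∈ Icc (-(1:ℝ)/2) (1/2) := by
        have := hp
        simp only [stripS, Set.mem_setOf_eq] at this
        rcases hsgn with h | h <;> rw [h] <;> constructor <;>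
          · simp only [one_mul, neg_one_mul, neg_le_neg_iff] <;>
            first
            | linarith [this.1, this.2]
            | linarith [this.1, this.2]
      refine ⟨hfrac, hp2, by rw [he2]; exact h1, ?_, ?_⟩
      · rw [he2]
        exact (Real.log_le_iff_le_exp (lt_of_lt_of_le one_pos h1)).mp h2
      · -- endpoint condition
        set c : ℝ := Real.log (e2 v) / e2 v with hc
        have hgm : gmap ((p.1 + n, (-1:ℝ) ^ n * p.2), (v.1, (-1:ℝ) ^ n * v.2)) =
            (p.1 + n + c * v.1, (-1:ℝ) ^ n * (p.2 + c * v.2)) := by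
          simp only [gmap, he2, Prod.mk_add_mk, Prod.smul_mk, smul_eq_mul, ← hc]
          ring_nf
        rw [hgm]
        simp only [stripS, Set.mem_setOf_eq]
        rcases eq_or_lt_of_le h1 with heq | hlt
        · have hc0 : c = 0 := by
            rw [hc, ← heq]
            simp
          rw [hc0]
          simpa using hp2
        · have hq := h3 hlt
          simp only [stripS, Set.mem_setOf_eq, Prod.snd_add, Prod.smul_snd,
            smul_eq_mul] at hq
          rcases hsgn with h | h <;> rw [h] <;> constructor <;>
            simp only [one_mul, neg_one_mul] <;> linarith [hq.1, hq.2]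
    · rw [← hw]
      exact (Quot.sound ⟨n, rfl, rfl, rfl, rfl⟩).symm
  · rintro ⟨⟨p, v⟩, ⟨h1, h2, h3, h4, h5⟩, hw⟩
    have hpos : (0:ℝ) < e2 v := lt_of_lt_of_le one_pos h3
    exact ⟨p, v, hw, h2, h3, (Real.log_le_iff_le_exp hpos).mpr h4,
      fun _ => h5⟩

/-- **Statement 10.** For every `0 < ε < 1/2`, the blow-up `BΔ(ε)` of the `ε`-neighbourhood
of the diagonal of `M × M`, regarded as a subspace of the tangent bundle `TM` via the
embedding `(p,q,R) ↦ e^{d(p,q)} v_R`, is compact. -/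
theorem bDelta_isCompact (ε : ℝ) (hε0 : 0 < ε) (hε : ε < 1/2) :
    IsCompact (BDelta ε) := by
  rw [bDelta_eq_image]
  exact (isCompact_Kset ε).image continuous_quot_mk

end
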